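/- Let (A,B,C) ∈ Σ_{m,r} with r ≥ 1 and Γ = C A^{r−1} B, and let p ∈ ℝ[s] be a monic Hurwitz polynomial of degree r−1. Then the system (A, B, C p(A)) has strict relative degree one with C p(A) B = Γ, and it is minimum phase; i.e., (A, B, C p(A)) ∈ Σ_{m,1}. -/

import Mathlib

open Matrix Polynomial

noncomputable section

/-- The Rosenbrock matrix `[[A − λI, B],[C, 0]]` of a square linear system, over `ℂ`. -/
def Rosenbrock {N : Type*} [Fintype N] [DecidableEq N] {m : ℕ}
    (A : Matrix N N ℝ) (B : Matrix N (Fin m) ℝ) (C : Matrix (Fin m) N ℝ) (lam : ℂ) :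
    Matrix (N ⊕ Fin m) (N ⊕ Fin m) ℂ :=
  Matrix.fromBlocks (A.map Complex.ofReal - lam • 1) (B.map Complex.ofReal)
    (C.map Complex.ofReal) 0

/-- Minimum phase: full rank of the Rosenbrock matrix in the closed right half-plane. -/
def MinimumPhase {N : Type*} [Fintype N] [DecidableEq N] {m : ℕ}
    (A : Matrix N N ℝ) (B : Matrix N (Fin m) ℝ) (C : Matrix (Fin m) N ℝ) : Prop :=
  ∀ lam : ℂ, 0 ≤ lam.re → (Rosenbrock A B C lam).rank = Fintype.card N + m

/-- Strict relative degree `r`. -/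
def StrictRelDeg {N : Type*} [Fintype N] [DecidableEq N] {m : ℕ}
    (A : Matrix N N ℝ) (B : Matrix N (Fin m) ℝ) (C : Matrix (Fin m) N ℝ) (r : ℕ) : Prop :=
  (∀ k, k < r - 1 → C * A ^ k * B = 0) ∧ IsUnit (C * A ^ (r - 1) * B)

/-- Positive definiteness of a (not necessarily symmetric) square matrix. -/
def PosDefQuad {m : ℕ} (G : Matrix (Fin m) (Fin m) ℝ) : Prop :=
  ∀ v : Fin m → ℝ, v ≠ 0 → 0 < v ⬝ᵥ G.mulVec v

/-- The class `Σ_{m,r}`. -/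
def SigmaClass {N : Type*} [Fintype N] [DecidableEq N] {m : ℕ}
    (A : Matrix N N ℝ) (B : Matrix N (Fin m) ℝ) (C : Matrix (Fin m) N ℝ) (r : ℕ) : Prop :=
  StrictRelDeg A B C r ∧ MinimumPhase A B C ∧ PosDefQuad (C * A ^ (r - 1) * B)

/-- A real polynomial is Hurwitz if all its complex roots have negative real part. -/
def HurwitzPoly (q : Polynomial ℝ) : Prop :=
  ∀ z : ℂ, Polynomial.aeval z q = 0 → z.re < 0

lemma sum_mulVec' {ι κ σ : Type*} [Fintype κ] (s : Finset σ)
    (f : σ → Matrix ι κ ℂ) (x : κ → ℂ) :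
    (∑ i ∈ s, f i).mulVec x = ∑ i ∈ s, (f i).mulVec x := by
  ext j
  simp [Matrix.mulVec, dotProduct, Matrix.sum_apply, Finset.sum_mul]
  rw [Finset.sum_comm]

lemma rank_full_iff {ι : Type*} [Fintype ι] [DecidableEq ι] (M : Matrix ι ι ℂ) :
    M.rank = Fintype.card ι ↔ Function.Injective M.mulVec := by
  have h := LinearMap.finrank_range_add_finrank_ker M.mulVecLin
  rw [Module.finrank_fintype_fun_eq_card] at h
  rw [show Function.Injective M.mulVec ↔ Function.Injective M.mulVecLin by
      rw [Matrix.coe_mulVecLin], ← LinearMap.ker_eq_bot, ← Submodule.finrank_eq_zero (R := ℂ),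
    Matrix.rank]
  omega

section maps

variable {n m : ℕ}

lemma map_aeval_eq (A : Matrix (Fin n) (Fin n) ℝ) (p : Polynomial ℝ) :
    (Polynomial.aeval A p).map Complex.ofReal
      = Polynomial.aeval (A.map Complex.ofReal) p := by
  have := Polynomial.aeval_algHom_apply (Complex.ofRealAm.mapMatrix (m := Fin n)) A p
  simpa [AlgHom.mapMatrix_apply, Complex.ofRealAm_coe] using this.symm

lemma map_pow_eq (A : Matrix (Fin n) (Fin n) ℝ) (k : ℕ) :
    (A ^ k).map Complex.ofReal = (A.map Complex.ofReal) ^ k := by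
  have := map_pow (Complex.ofRealHom.mapMatrix (m := Fin n)) A k
  exact this

lemma map_CAB (A : Matrix (Fin n) (Fin n) ℝ) (B : Matrix (Fin n) (Fin m) ℝ)
    (C : Matrix (Fin m) (Fin n) ℝ) (k : ℕ) :
    C.map Complex.ofReal * (A.map Complex.ofReal) ^ k * B.map Complex.ofReal
      = (C * A ^ k * B).map Complex.ofReal := by
  rw [show ((C * A ^ k * B).map Complex.ofReal : Matrix (Fin m) (Fin m) ℂ)
      = (C * A ^ k * B).map Complex.ofRealHom from rfl]
  rw [Matrix.map_mul, Matrix.map_mul]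
  rw [show ((A ^ k).map Complex.ofRealHom : Matrix (Fin n) (Fin n) ℂ)
      = (A ^ k).map Complex.ofReal from rfl, map_pow_eq]
  rfl

lemma map_Cp (A : Matrix (Fin n) (Fin n) ℝ) (C : Matrix (Fin m) (Fin n) ℝ) (p : Polynomial ℝ) :
    (C * Polynomial.aeval A p).map Complex.ofReal
      = C.map Complex.ofReal * Polynomial.aeval (A.map Complex.ofReal) p := by
  rw [show ((C * Polynomial.aeval A p).map Complex.ofReal : Matrix (Fin m) (Fin n) ℂ)
      = (C * Polynomial.aeval A p).map Complex.ofRealHom from rfl]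
  rw [Matrix.map_mul, ← map_aeval_eq]
  rfl

end maps

lemma CpB_eq (n m r : ℕ)
    (A : Matrix (Fin n) (Fin n) ℝ) (B : Matrix (Fin n) (Fin m) ℝ) (C : Matrix (Fin m) (Fin n) ℝ)
    (hCAB : ∀ k, k < r - 1 → C * A ^ k * B = 0)
    (p : Polynomial ℝ) (hmonic : p.Monic) (hdeg : p.natDegree = r - 1) :
    (C * Polynomial.aeval A p) * B = C * A ^ (r - 1) * B := by
  rw [Polynomial.aeval_eq_sum_range, Matrix.mul_sum, Matrix.sum_mul]
  rw [Finset.sum_eq_single (r - 1)]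
  · have h1 : p.coeff (r - 1) = 1 := hdeg ▸ hmonic.coeff_natDegree
    simp [h1]
  · intro i hi hne
    have hilt : i < r - 1 := by
      simp only [Finset.mem_range, hdeg] at hi
      omega
    simp [mul_smul_comm, smul_mul_assoc, hCAB i hilt]
  · intro h
    exfalso
    exact h (by simp [hdeg])

lemma minphase_reduce (n m r : ℕ) (hr : 1 ≤ r)
    (A : Matrix (Fin n) (Fin n) ℝ) (B : Matrix (Fin n) (Fin m) ℝ) (C : Matrix (Fin m) (Fin n) ℝ)
    (hCAB : ∀ k, k < r - 1 → C * A ^ k * B = 0)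
    (hMP : MinimumPhase A B C)
    (p : Polynomial ℝ) (hdeg : p.natDegree = r - 1)
    (hHurwitz : HurwitzPoly p) :
    MinimumPhase A B (C * Polynomial.aeval A p) := by
  intro lam hlam
  have hcard : Fintype.card (Fin n) + m = Fintype.card (Fin n ⊕ Fin m) := by simp
  rw [hcard, rank_full_iff]
  -- reduce to: kernel is trivial
  set Ac := A.map Complex.ofReal with hAc
  set Bc := B.map Complex.ofReal with hBc
  set Cc := C.map Complex.ofReal with hCc
  have hker : ∀ v : (Fin n ⊕ Fin m) → ℂ,
      (Rosenbrock A B (C * Polynomial.aeval A p) lam).mulVec v = 0 → v = 0 := by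
    intro v hv
    set x : Fin n → ℂ := v ∘ Sum.inl with hx
    set u : Fin m → ℂ := v ∘ Sum.inr with hu
    rw [Rosenbrock, Matrix.fromBlocks_mulVec] at hv
    have h1 : (Ac - lam • 1).mulVec x + Bc.mulVec u = 0 :=
      funext fun i => congrFun hv (Sum.inl i)
    have h2 : ((C * Polynomial.aeval A p).map Complex.ofReal).mulVec x = 0 := by
      have h2' := funext fun i => congrFun hv (Sum.inr i)
      simp [Matrix.zero_mulVec] at h2'
      exact h2'
    have hAx : Ac.mulVec x = lam • x - Bc.mulVec u := by
      rw [Matrix.sub_mulVec, Matrix.smul_mulVec, Matrix.one_mulVec] at h1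
      funext i
      have := congrFun h1 i
      simp only [Pi.add_apply, Pi.sub_apply, Pi.smul_apply, Pi.zero_apply, smul_eq_mul] at this ⊢
      linear_combination this
    -- key induction
    have hCAx : ∀ k, k ≤ r - 1 →
        Cc.mulVec ((Ac ^ k).mulVec x) = lam ^ k • Cc.mulVec x := by
      intro k
      induction k with
      | zero => intro _; simp [Matrix.one_mulVec]
      | succ k ih =>
        intro hk1
        have hklt : k < r - 1 := hk1
        have hCABc : Cc * Ac ^ k * Bc = 0 := by
          rw [hAc, hBc, hCc, map_CAB, hCAB k hklt]
          simp
        rw [pow_succ, ← Matrix.mulVec_mulVec, hAx, Matrix.mulVec_sub,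
          Matrix.mulVec_smul, Matrix.mulVec_sub, Matrix.mulVec_smul,
          ih (Nat.le_of_succ_le hk1)]
        have hz : Cc.mulVec ((Ac ^ k).mulVec (Bc.mulVec u)) = 0 := by
          rw [Matrix.mulVec_mulVec, Matrix.mulVec_mulVec, hCABc, Matrix.zero_mulVec]
        rw [hz, sub_zero, smul_smul, ← pow_succ']
    -- compute (C p(A))ℂ x = p(lam) • Cx
    have hdlt : ∀ i ∈ Finset.range (p.natDegree + 1), i ≤ r - 1 := by
      intro i hi
      simp only [Finset.mem_range, hdeg] at hi
      omega
    have hmain : ((C * Polynomial.aeval A p).map Complex.ofReal).mulVec x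
        = (Polynomial.aeval lam p) • Cc.mulVec x := by
      rw [map_Cp, ← Matrix.mulVec_mulVec, Polynomial.aeval_eq_sum_range]
      have hconv : ∀ i, (p.coeff i • (Ac ^ i) : Matrix (Fin n) (Fin n) ℂ)
          = ((p.coeff i : ℂ)) • Ac ^ i := by
        intro i
        ext a b
        simp [Complex.real_smul]
      simp only [← hAc, hconv]
      rw [sum_mulVec']
      simp only [Matrix.smul_mulVec]
      rw [← Matrix.coe_mulVecLin, map_sum]
      simp only [_root_.map_smul, Matrix.coe_mulVecLin]
      simp only [← hCc, ← hAc]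
      rw [Finset.sum_congr rfl (fun i hi => by rw [hCAx i (hdlt i hi)])]
      simp only [smul_smul]
      rw [← Finset.sum_smul]
      congr 1
      rw [Polynomial.aeval_eq_sum_range]
      apply Finset.sum_congr rfl
      intro i _
      rw [Complex.real_smul]
    rw [hmain] at h2
    have hplam : (Polynomial.aeval lam p : ℂ) ≠ 0 := by
      intro h0
      have := hHurwitz lam h0
      linarith
    have hCx : Cc.mulVec x = 0 := by
      rcases smul_eq_zero.mp h2 with h | h
      · exact absurd h hplam
      · exact h
    -- now v is in the kernel of the original Rosenbrock matrix
    have hold : (Rosenbrock A B C lam).mulVec v = 0 := by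
      rw [Rosenbrock, Matrix.fromBlocks_mulVec]
      funext i
      cases i with
      | inl i => exact congrFun h1 i
      | inr i =>
        have hCx' : (C.map Complex.ofReal) *ᵥ (v ∘ Sum.inl) = 0 := hCx
        simp [Matrix.zero_mulVec, hCx']
    have hinj : Function.Injective (Rosenbrock A B C lam).mulVec := by
      rw [← rank_full_iff, ← hcard]
      exact hMP lam hlam
    have := hinj (a₁ := v) (a₂ := 0) (by rw [hold, Matrix.mulVec_zero])
    exact this
  intro v w hvw
  have : v - w = 0 := hker _ (by rw [Matrix.mulVec_sub, hvw, sub_self])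
  exact sub_eq_zero.mp this

/-- **Relative degree reduction by a Hurwitz polynomial of the state matrix.**
If `(A,B,C) ∈ Σ_{m,r}` and `p` is monic Hurwitz of degree `r−1`, then
`(A, B, C p(A)) ∈ Σ_{m,1}` and `C p(A) B = C A^{r−1} B`. -/
theorem stmt_7 (n m r : ℕ) (hr : 1 ≤ r)
    (A : Matrix (Fin n) (Fin n) ℝ) (B : Matrix (Fin n) (Fin m) ℝ) (C : Matrix (Fin m) (Fin n) ℝ)
    (hSigma : SigmaClass A B C r)
    (p : Polynomial ℝ) (hmonic : p.Monic) (hdeg : p.natDegree = r - 1)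
    (hHurwitz : HurwitzPoly p) :
    SigmaClass A B (C * Polynomial.aeval A p) 1 ∧
    (C * Polynomial.aeval A p) * B = C * A ^ (r - 1) * B := by
  obtain ⟨⟨hCAB, hUnit⟩, hMP, hPD⟩ := hSigma
  have hG : (C * Polynomial.aeval A p) * B = C * A ^ (r - 1) * B :=
    CpB_eq n m r A B C hCAB p hmonic hdeg
  have e : (C * Polynomial.aeval A p) * A ^ (1 - 1) * B = C * A ^ (r - 1) * B := by
    norm_num [hG]
  refine ⟨⟨⟨fun k hk => absurd hk (by omega), ?_⟩, ?_, ?_⟩, hG⟩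
  · rw [e]
    exact hUnit
  · exact minphase_reduce n m r hr A B C hCAB hMP p hdeg hHurwitz
  · rw [e]
    exact hPD
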